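/- Let ω : ℝ → ℝ³ be continuous and let R : ℝ → M₃(ℝ) be differentiable and satisfy the kinematic equation Ṙ(t) = S(ω(t)) R(t) for all t. If R(0) ∈ SO(3), then R(t) ∈ SO(3) for all t ∈ ℝ; that is, the attitude kinematics leave SO(3) invariant. -/

import Mathlib

open Matrix

noncomputable section

attribute [local instance] Matrix.normedAddCommGroup Matrix.normedSpace

/-- The space of real 3×3 matrices. -/
abbrev M3 := Matrix (Fin 3) (Fin 3) ℝ

/-- Vectors in ℝ³. -/
abbrev V3 := Fin 3 → ℝ

/-- The skew-symmetric matrix `S a` associated with the cross product,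
i.e. `S a *ᵥ b = a × b`. -/
def S (a : V3) : M3 :=
  !![0, -a 2, a 1;
     a 2, 0, -a 0;
     -a 1, a 0, 0]

/-- SO(3): real 3×3 matrices `R` with `Rᵀ * R = 1` and `det R = 1`. -/
def SO3 : Set M3 := {R | Rᵀ * R = 1 ∧ R.det = 1}

/-- If `ω : ℝ → ℝ³` is continuous, `R : ℝ → M₃(ℝ)` is differentiable and satisfies
the attitude kinematics `Ṙ(t) = S(ω(t)) R(t)` for all `t`, and `R(0) ∈ SO(3)`,
then `R(t) ∈ SO(3)` for all `t`: the attitude kinematics leave SO(3) invariant. -/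
theorem attitude_kinematics_leave_SO3_invariant
    (ω : ℝ → V3) (hω : Continuous ω)
    (R : ℝ → M3) (hR : ∀ t, HasDerivAt R (S (ω t) * R t) t)
    (h0 : R 0 ∈ SO3) :
    ∀ t : ℝ, R t ∈ SO3 := by
  have hskew : ∀ a : V3, (S a)ᵀ = -S a := by
    intro a; ext i j; fin_cases i <;> fin_cases j <;> simp [S]
  have hentry : ∀ (t : ℝ) (i j : Fin 3),
      HasDerivAt (fun t => R t i j) ((S (ω t) * R t) i j) t := by
    intro t i j
    exact hasDerivAt_pi.1 (hasDerivAt_pi.1 (hR t) i) j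
  have hGderiv : ∀ (t : ℝ) (i j : Fin 3),
      HasDerivAt (fun t => ((R t)ᵀ * R t) i j) 0 t := by
    intro t i j
    have h1 : HasDerivAt (fun t => ∑ k, R t k i * R t k j)
        (∑ k, ((S (ω t) * R t) k i * R t k j + R t k i * (S (ω t) * R t) k j)) t :=
      HasDerivAt.fun_sum fun k _ => (hentry t k i).mul (hentry t k j)
    have heq : (fun t => ((R t)ᵀ * R t) i j) = fun t => ∑ k, R t k i * R t k j := by
      funext s; simp [Matrix.mul_apply]
    have hzero : (∑ k, ((S (ω t) * R t) k i * R t k j + R t k i * (S (ω t) * R t) k j)) = 0 := by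
      have h2 : (∑ k, ((S (ω t) * R t) k i * R t k j + R t k i * (S (ω t) * R t) k j))
          = ((S (ω t) * R t)ᵀ * R t + (R t)ᵀ * (S (ω t) * R t)) i j := by
        simp [Matrix.mul_apply, Matrix.add_apply, Finset.sum_add_distrib, mul_comm]
      have h3 : (S (ω t) * R t)ᵀ * R t = -((R t)ᵀ * (S (ω t) * R t)) := by
        rw [Matrix.transpose_mul, hskew]
        simp [Matrix.mul_assoc]
      rw [h2, h3, neg_add_cancel, Matrix.zero_apply]
    rw [heq]
    exact hzero ▸ h1
  have hGconst : ∀ t : ℝ, (R t)ᵀ * R t = 1 := by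
    intro t
    ext i j
    have := is_const_of_deriv_eq_zero (f := fun t => ((R t)ᵀ * R t) i j)
      (fun x => (hGderiv x i j).differentiableAt) (fun x => (hGderiv x i j).deriv) t 0
    rw [this, h0.1]
  have hcont : Continuous fun t => (R t).det := by
    have : Continuous R := continuous_iff_continuousAt.2 fun t => (hR t).continuousAt
    exact this.matrix_det
  have hdet2 : ∀ t : ℝ, (R t).det * (R t).det = 1 := by
    intro t
    have := congrArg Matrix.det (hGconst t)
    simpa [Matrix.det_mul, Matrix.det_transpose] using this
  intro t
  refine ⟨hGconst t, ?_⟩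
  rcases mul_self_eq_one_iff.1 (hdet2 t) with h | h
  · exact h
  · exfalso
    have h01 : (0 : ℝ) ∈ Set.Icc ((R t).det) ((R 0).det) := by
      rw [h, h0.2]; constructor <;> norm_num
    obtain ⟨s, hs⟩ := intermediate_value_univ t 0 hcont h01
    have := hdet2 s
    have hs' : det (R s) = 0 := hs
    rw [hs'] at this
    norm_num at this
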